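/- The image of the map from SL(2,ℂ) × SL(2,ℂ) to ℂ⁴ sending (A, B) to ((tr A)², (tr B)², (tr AB)², tr A · tr B · tr AB) is exactly the set {(X, Y, Z, W) ∈ ℂ⁴ : W² = X·Y·Z}. -/

import Mathlib

open Matrix

private lemma sqrt_exists (X : ℂ) : ∃ x : ℂ, x ^ 2 = X :=
  IsAlgClosed.exists_pow_nat_eq X (n := 2) (by norm_num)

private lemma trace_surj (x y z : ℂ) :
    ∃ A B : SpecialLinearGroup (Fin 2) ℂ,
      Matrix.trace (A : Matrix (Fin 2) (Fin 2) ℂ) = x ∧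
      Matrix.trace (B : Matrix (Fin 2) (Fin 2) ℂ) = y ∧
      Matrix.trace ((A * B : SpecialLinearGroup (Fin 2) ℂ) : Matrix (Fin 2) (Fin 2) ℂ) = z := by
  obtain ⟨s, hs⟩ := sqrt_exists (z ^ 2 - 4)
  set b : ℂ := (z + s) / 2 with hb
  have hbz : b * (b - z) = -1 := by
    rw [hb]; linear_combination hs / 4
  refine ⟨⟨!![x, -1; 1, 0], ?_⟩, ⟨!![0, b; b - z, y], ?_⟩, ?_, ?_, ?_⟩
  · simp [Matrix.det_fin_two_of]
  · rw [Matrix.det_fin_two_of]; linear_combination -hbz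
  · simp [Matrix.trace_fin_two_of]
  · simp [Matrix.trace_fin_two_of]
  · show Matrix.trace (!![x, -1; 1, 0] * !![0, b; b - z, y]) = z
    rw [show !![x, -1; 1, 0] * !![0, b; b - z, y]
        = !![x * 0 + (-1) * (b - z), x * b + (-1) * y; 1 * 0 + 0 * (b - z), 1 * b + 0 * y] by
      ext i j; fin_cases i <;> fin_cases j <;>
        simp [Matrix.mul_apply, Fin.sum_univ_two]]
    rw [Matrix.trace_fin_two_of]; ring

/-- The image of `SL(2,ℂ) × SL(2,ℂ) → ℂ⁴`,
`(A, B) ↦ ((tr A)², (tr B)², (tr AB)², tr A · tr B · tr AB)`, is exactly the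
hypersurface `{(X, Y, Z, W) : W² = X Y Z}`. -/
theorem range_character_map_F2 :
    Set.range (fun p : SpecialLinearGroup (Fin 2) ℂ × SpecialLinearGroup (Fin 2) ℂ =>
      ((Matrix.trace (p.1 : Matrix (Fin 2) (Fin 2) ℂ)) ^ 2,
       (Matrix.trace (p.2 : Matrix (Fin 2) (Fin 2) ℂ)) ^ 2,
       (Matrix.trace ((p.1 * p.2 : SpecialLinearGroup (Fin 2) ℂ)
          : Matrix (Fin 2) (Fin 2) ℂ)) ^ 2,
       Matrix.trace (p.1 : Matrix (Fin 2) (Fin 2) ℂ)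
         * Matrix.trace (p.2 : Matrix (Fin 2) (Fin 2) ℂ)
         * Matrix.trace ((p.1 * p.2 : SpecialLinearGroup (Fin 2) ℂ)
             : Matrix (Fin 2) (Fin 2) ℂ)))
    = {q : ℂ × ℂ × ℂ × ℂ | q.2.2.2 ^ 2 = q.1 * q.2.1 * q.2.2.1} := by
  ext ⟨X, Y, Z, W⟩
  constructor
  · rintro ⟨⟨A, B⟩, h⟩
    simp only [Prod.mk.injEq] at h
    obtain ⟨h1, h2, h3, h4⟩ := h
    simp only [Set.mem_setOf_eq]
    rw [← h1, ← h2, ← h3, ← h4]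
    ring
  · intro h
    simp only [Set.mem_setOf_eq] at h
    obtain ⟨x, hx⟩ := sqrt_exists X
    obtain ⟨y, hy⟩ := sqrt_exists Y
    subst hx; subst hy
    by_cases hxy : x * y = 0
    · have hW : W = 0 := by
        have h2 : W ^ 2 = 0 := by
          rcases mul_eq_zero.mp hxy with h0 | h0 <;> rw [h, h0] <;> ring
        exact pow_eq_zero_iff (by norm_num) |>.mp h2
      obtain ⟨z, hz⟩ := sqrt_exists Z
      obtain ⟨A, B, hA, hB, hAB⟩ := trace_surj x y z
      refine ⟨⟨A, B⟩, ?_⟩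
      simp only [hA, hB, hAB, Prod.mk.injEq]
      exact ⟨trivial, trivial, hz, by rw [hW]; rcases mul_eq_zero.mp hxy with h0 | h0 <;> rw [h0] <;> ring⟩
    · obtain ⟨A, B, hA, hB, hAB⟩ := trace_surj x y (W / (x * y))
      refine ⟨⟨A, B⟩, ?_⟩
      simp only [hA, hB, hAB, Prod.mk.injEq]
      refine ⟨trivial, trivial, ?_, ?_⟩
      · have hx0 : x ≠ 0 := left_ne_zero_of_mul hxy
        have hy0 : y ≠ 0 := right_ne_zero_of_mul hxy
        field_simp
        linear_combination h
      · have hx0 : x ≠ 0 := left_ne_zero_of_mul hxy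
        have hy0 : y ≠ 0 := right_ne_zero_of_mul hxy
        field_simp
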